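/- Let T be a digraph with t ≥ 2 vertices and let H_1, ..., H_t each be a digraph with at least two vertices. If T has a Hamiltonian cycle, then the composition Q = T[H_1, ..., H_t] has a good pair rooted at every vertex of Q. -/

import Mathlib

variable {V : Type*}

/-- A digraph (given by its arc relation) is strongly connected. -/
def Strong (A : V → V → Prop) : Prop :=
  ∀ x y : V, Relation.ReflTransGen A x y

/-- `B` is an out-branching of the digraph `A` rooted at `r`:
a spanning subdigraph in which every vertex is reachable from `r`,
every vertex other than `r` has in-degree exactly one, and `r` has in-degree zero. -/
def IsOutBranching (A B : V → V → Prop) (r : V) : Prop :=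
  (∀ x y, B x y → A x y) ∧
  (∀ v, Relation.ReflTransGen B r v) ∧
  (∀ v, v ≠ r → Nat.card {u : V // B u v} = 1) ∧
  (∀ u, ¬ B u r)

/-- `B` is an in-branching of the digraph `A` rooted at `r`. -/
def IsInBranching (A B : V → V → Prop) (r : V) : Prop :=
  (∀ x y, B x y → A x y) ∧
  (∀ v, Relation.ReflTransGen B v r) ∧
  (∀ v, v ≠ r → Nat.card {u : V // B v u} = 1) ∧
  (∀ u, ¬ B r u)

/-- A good pair rooted at `r`: arc-disjoint out- and in-branchings rooted at `r`. -/
def GoodPair (A : V → V → Prop) (r : V) : Prop :=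
  ∃ Bp Bm : V → V → Prop, IsOutBranching A Bp r ∧ IsInBranching A Bm r ∧
    ∀ x y, ¬ (Bp x y ∧ Bm x y)

/-- Arc relation of the composition `T[H_1, …, H_t]`. -/
def CompArc {t : ℕ} (T : Fin t → Fin t → Prop) (n : Fin t → ℕ)
    (H : ∀ i : Fin t, Fin (n i) → Fin (n i) → Prop)
    (x y : (i : Fin t) × Fin (n i)) : Prop :=
  (∃ h : x.1 = y.1, H y.1 (h ▸ x.2) y.2) ∨ (x.1 ≠ y.1 ∧ T x.1 y.1)

/-- A semicomplete digraph: some arc between every pair of distinct vertices. -/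
def Semicomplete {α : Type*} (T : α → α → Prop) : Prop :=
  ∀ x y : α, x ≠ y → T x y ∨ T y x

/-- `T` has a Hamiltonian cycle. -/
def HasHamCycle {α : Type*} (T : α → α → Prop) : Prop :=
  ∃ l : List α, l.Nodup ∧ (∀ v : α, v ∈ l) ∧ l.Chain' T ∧
    ∀ a b, l.head? = some a → l.getLast? = some b → T b a

section Aux

theorem modfact (a t : ℕ) (h : 0 < t) (h2 : a < 2*t) :
    (a < t ∧ a % t = a) ∨ (t ≤ a ∧ a % t = a - t) := by
  rcases lt_or_ge a t with h' | h'
  · exact Or.inl ⟨h', Nat.mod_eq_of_lt h'⟩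
  · refine Or.inr ⟨h', ?_⟩
    have e : a - t + t = a := by omega
    calc a % t = (a - t + t) % t := by rw [e]
    _ = (a - t) % t := Nat.add_mod_right _ _
    _ = a - t := Nat.mod_eq_of_lt (by omega)

/-- cyclic successor -/
def nxt (t m : ℕ) : ℕ := if m + 1 = t then 0 else m + 1

theorem nxt_spec (t a : ℕ) : (a + 1 = t ∧ nxt t a = 0) ∨ (a + 1 ≠ t ∧ nxt t a = a + 1) := by
  by_cases h : a + 1 = t
  · exact Or.inl ⟨h, if_pos h⟩
  · exact Or.inr ⟨h, if_neg h⟩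

theorem reach_of_parent {V : Type*} (B : V → V → Prop) (r : V) (M : V → ℕ)
    (hM : ∀ y, y ≠ r → ∃ x, B x y ∧ M x < M y) :
    ∀ y, Relation.ReflTransGen B r y := by
  have key : ∀ N y, M y ≤ N → Relation.ReflTransGen B r y := by
    intro N
    induction N with
    | zero =>
      intro y hy
      by_cases h : y = r
      · subst h; exact Relation.ReflTransGen.refl
      · obtain ⟨x, _, hlt⟩ := hM y h; omega
    | succ N ih =>
      intro y hy
      by_cases h : y = r
      · subst h; exact Relation.ReflTransGen.refl
      · obtain ⟨x, hB, hlt⟩ := hM y h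
        exact (ih x (by omega)).tail hB
  exact fun y => key (M y) y le_rfl

theorem reach_of_child {V : Type*} (B : V → V → Prop) (r : V) (M : V → ℕ)
    (hM : ∀ x, x ≠ r → ∃ y, B x y ∧ M y < M x) :
    ∀ x, Relation.ReflTransGen B x r := by
  have key : ∀ N x, M x ≤ N → Relation.ReflTransGen B x r := by
    intro N
    induction N with
    | zero =>
      intro x hx
      by_cases h : x = r
      · subst h; exact Relation.ReflTransGen.refl
      · obtain ⟨y, _, hlt⟩ := hM x h; omega
    | succ N ih =>
      intro x hx
      by_cases h : x = r
      · subst h; exact Relation.ReflTransGen.refl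
      · obtain ⟨y, hB, hlt⟩ := hM x h
        exact Relation.ReflTransGen.head hB (ih y (by omega))
  exact fun x => key (M x) x le_rfl

def avD {t : ℕ} (n : Fin t → ℕ) (hn : ∀ i, 2 ≤ n i) (i : Fin t) : Fin (n i) := ⟨1, hn i⟩

def bvD {t : ℕ} (n : Fin t → ℕ) (hn : ∀ i, 2 ≤ n i) (i : Fin t) : Fin (n i) :=
  ⟨0, by have := hn i; omega⟩

def BpD {t : ℕ} (n : Fin t → ℕ) (hn : ∀ i, 2 ≤ n i) (q : Fin t → ℕ)
    (r x y : (i : Fin t) × Fin (n i)) : Prop :=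
  q y.1 = nxt t (q x.1) ∧ y ≠ r ∧
    (x = r ∨ (x.1 ≠ r.1 ∧ ((x.2 = avD n hn x.1 ∧ y.2 = bvD n hn y.1) ∨
      (x.2 = bvD n hn x.1 ∧ y.2 ≠ bvD n hn y.1))))

def BmD {t : ℕ} (n : Fin t → ℕ) (hn : ∀ i, 2 ≤ n i) (q : Fin t → ℕ)
    (r x y : (i : Fin t) × Fin (n i)) : Prop :=
  q y.1 = nxt t (q x.1) ∧ x ≠ r ∧
    (y = r ∨ (y.1 ≠ r.1 ∧ ((x.1 ≠ r.1 ∧ x.2 = avD n hn x.1 ∧ y.2 = avD n hn y.1) ∨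
      (¬(x.1 ≠ r.1 ∧ x.2 = avD n hn x.1) ∧ y.2 = bvD n hn y.1))))

end Aux
theorem keyLemma {t : ℕ} (ht : 2 ≤ t) (T : Fin t → Fin t → Prop)
    (n : Fin t → ℕ) (hn : ∀ i, 2 ≤ n i)
    (H : ∀ i : Fin t, Fin (n i) → Fin (n i) → Prop)
    (r : (i : Fin t) × Fin (n i))
    (c : ℕ → Fin t) (q : Fin t → ℕ)
    (hqlt : ∀ i, q i < t)
    (hcq : ∀ i, c (q i) = i)
    (hqc : ∀ m, m < t → q (c m) = m)
    (hc0 : c 0 = r.1)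
    (hT : ∀ m, m < t → T (c m) (c (nxt t m))) :
    GoodPair (CompArc T n H) r := by
  classical
  have hq0 : q r.1 = 0 := by rw [← hc0, hqc 0 (by omega)]
  have hqinj : ∀ i j : Fin t, q i = q j → i = j := fun i j h => by
    rw [← hcq i, h, hcq j]
  have havbv : ∀ i, avD n hn i ≠ bvD n hn i := by
    intro i h
    have := congrArg Fin.val h
    simp [avD, bvD] at this
  -- any arc of Bp/Bm is an arc of the composition
  have harc : ∀ x y : (i : Fin t) × Fin (n i),
      q y.1 = nxt t (q x.1) → CompArc T n H x y := by
    intro x y hS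
    have hne : x.1 ≠ y.1 := by
      intro h
      rw [← h] at hS
      have h1 := hqlt x.1
      have h2 := nxt_spec t (q x.1)
      omega
    refine Or.inr ⟨hne, ?_⟩
    have h3 := hT (q x.1) (hqlt x.1)
    rw [← hS, hcq, hcq] at h3
    exact h3
  -- parents for the out-branching
  have hparent : ∀ y : (i : Fin t) × Fin (n i), y ≠ r →
      ∃ x, BpD n hn q r x y ∧
        (if x = r then 0 else if q x.1 = 0 then t else q x.1) <
        (if y = r then 0 else if q y.1 = 0 then t else q y.1) := by
    intro y hy
    by_cases hj1 : q y.1 = 1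
    · refine ⟨r, ⟨?_, hy, Or.inl rfl⟩, ?_⟩
      · rw [hq0]
        have := nxt_spec t 0
        omega
      · rw [if_pos rfl, if_neg hy, if_neg (by omega), hj1]
        omega
    · set j := q y.1 with hjdef
      have hjt : j < t := hqlt y.1
      set m := if j = 0 then t - 1 else j - 1 with hmdef
      have hmspec : (j = 0 ∧ m = t - 1) ∨ (j ≠ 0 ∧ m = j - 1) := by
        rw [hmdef]
        by_cases h : j = 0
        · exact Or.inl ⟨h, if_pos h⟩
        · exact Or.inr ⟨h, if_neg h⟩
      have hm1 : m < t := by omega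
      have hm2 : 1 ≤ m := by omega
      have hqm : q (c m) = m := hqc m hm1
      have hcmr : c m ≠ r.1 := by
        intro h
        rw [h, hq0] at hqm
        omega
      refine ⟨⟨c m, if y.2 = bvD n hn y.1 then avD n hn (c m) else bvD n hn (c m)⟩,
        ⟨?_, hy, Or.inr ⟨hcmr, ?_⟩⟩, ?_⟩
      · show q y.1 = nxt t (q (c m))
        rw [hqm]
        rcases nxt_spec t m with ⟨h1, h2⟩ | ⟨h1, h2⟩ <;> rw [h2] <;> omega
      · show (if y.2 = bvD n hn y.1 then avD n hn (c m) else bvD n hn (c m)) = avD n hn (c m) ∧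
            y.2 = bvD n hn y.1 ∨ _ ∧ _
        by_cases hyb : y.2 = bvD n hn y.1
        · exact Or.inl ⟨by rw [if_pos hyb], hyb⟩
        · exact Or.inr ⟨by rw [if_neg hyb], hyb⟩
      · have hxr : (⟨c m, if y.2 = bvD n hn y.1 then avD n hn (c m) else bvD n hn (c m)⟩ :
            (i : Fin t) × Fin (n i)) ≠ r := by
          intro h
          exact hcmr (congrArg Sigma.fst h)
        rw [if_neg hxr, if_neg hy]
        show (if q (c m) = 0 then t else q (c m)) < _
        rw [hqm, if_neg (by omega)]
        split <;> omega
  -- children for the in-branching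
  have hchild : ∀ x : (i : Fin t) × Fin (n i), x ≠ r →
      ∃ y, BmD n hn q r x y ∧
        (if y = r then 0 else t - q y.1) < (if x = r then 0 else t - q x.1) := by
    intro x hx
    set k := q x.1 with hkdef
    have hkt : k < t := hqlt x.1
    by_cases hk : k + 1 = t
    · refine ⟨r, ⟨?_, hx, Or.inl rfl⟩, ?_⟩
      · rw [hq0, ← hkdef]
        have := nxt_spec t k
        omega
      · rw [if_pos rfl, if_neg hx]
        omega
    · have hk1 : k + 1 < t := by omega
      have hqk : q (c (k + 1)) = k + 1 := hqc (k + 1) hk1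
      have hckr : c (k + 1) ≠ r.1 := by
        intro h
        rw [h, hq0] at hqk
        omega
      refine ⟨⟨c (k + 1), if x.1 ≠ r.1 ∧ x.2 = avD n hn x.1 then avD n hn (c (k + 1))
          else bvD n hn (c (k + 1))⟩, ⟨?_, hx, Or.inr ⟨hckr, ?_⟩⟩, ?_⟩
      · show q (c (k + 1)) = nxt t (q x.1)
        rw [hqk, ← hkdef]
        have := nxt_spec t k
        omega
      · by_cases hA : x.1 ≠ r.1 ∧ x.2 = avD n hn x.1
        · exact Or.inl ⟨hA.1, hA.2, by rw [if_pos hA]⟩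
        · exact Or.inr ⟨hA, by rw [if_neg hA]⟩
      · have hyr : (⟨c (k + 1), if x.1 ≠ r.1 ∧ x.2 = avD n hn x.1 then avD n hn (c (k + 1))
            else bvD n hn (c (k + 1))⟩ : (i : Fin t) × Fin (n i)) ≠ r := by
          intro h
          exact hckr (congrArg Sigma.fst h)
        rw [if_neg hyr, if_neg hx]
        show t - q (c (k + 1)) < t - k
        rw [hqk]
        omega
  refine ⟨BpD n hn q r, BmD n hn q r, ⟨?_, ?_, ?_, ?_⟩, ⟨?_, ?_, ?_, ?_⟩, ?_⟩
  · -- Bp ⊆ CompArc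
    intro x y hB
    exact harc x y hB.1
  · -- reachability from r
    exact reach_of_parent _ r (fun y => if y = r then 0 else if q y.1 = 0 then t else q y.1)
      hparent
  · -- in-degree one
    intro y hy
    rw [Nat.card_eq_one_iff_unique]
    constructor
    · constructor
      rintro ⟨x, hx⟩ ⟨x', hx'⟩
      apply Subtype.ext
      obtain ⟨hS, _, h3⟩ := hx
      obtain ⟨hS', _, h3'⟩ := hx'
      have hq1 : q x.1 = q x'.1 := by
        have e : nxt t (q x.1) = nxt t (q x'.1) := by rw [← hS, ← hS']
        have l1 := hqlt x.1
        have l2 := hqlt x'.1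
        have s1 := nxt_spec t (q x.1)
        have s2 := nxt_spec t (q x'.1)
        omega
      have h2 : x.1 = x'.1 := hqinj _ _ hq1
      rcases x with ⟨i, v⟩
      rcases x' with ⟨i', v'⟩
      obtain rfl : i = i' := h2
      suffices hvv : v = v' by exact congrArg (Sigma.mk i) hvv
      rcases h3 with h3 | ⟨hir, hcs⟩
      · rcases h3' with h3' | ⟨hir', _⟩
        · have := h3.trans h3'.symm
          simpa using this
        · exact absurd (congrArg Sigma.fst h3) hir'
      · rcases h3' with h3' | ⟨_, hcs'⟩
        · exact absurd (congrArg Sigma.fst h3') hir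
        · rcases hcs with ⟨hv, hyb⟩ | ⟨hv, hyb⟩
          · rcases hcs' with ⟨hv', _⟩ | ⟨_, hyb'⟩
            · exact hv.trans hv'.symm
            · exact absurd hyb hyb'
          · rcases hcs' with ⟨_, hyb'⟩ | ⟨hv', _⟩
            · exact absurd hyb' hyb
            · exact hv.trans hv'.symm
    · obtain ⟨x, hx, _⟩ := hparent y hy
      exact ⟨⟨x, hx⟩⟩
  · -- no arc into r
    intro u hu
    exact hu.2.1 rfl
  · -- Bm ⊆ CompArc
    intro x y hB
    exact harc x y hB.1
  · -- reachability to r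
    exact reach_of_child _ r (fun x => if x = r then 0 else t - q x.1) hchild
  · -- out-degree one
    intro x hx
    rw [Nat.card_eq_one_iff_unique]
    constructor
    · constructor
      rintro ⟨y, hy⟩ ⟨y', hy'⟩
      apply Subtype.ext
      obtain ⟨hS, _, h3⟩ := hy
      obtain ⟨hS', _, h3'⟩ := hy'
      have hq1 : q y.1 = q y'.1 := by rw [hS, hS']
      have h2 : y.1 = y'.1 := hqinj _ _ hq1
      rcases y with ⟨i, v⟩
      rcases y' with ⟨i', v'⟩
      obtain rfl : i = i' := h2
      suffices hvv : v = v' by exact congrArg (Sigma.mk i) hvv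
      rcases h3 with h3 | ⟨hir, hcs⟩
      · rcases h3' with h3' | ⟨hir', _⟩
        · have := h3.trans h3'.symm
          simpa using this
        · exact absurd (congrArg Sigma.fst h3) hir'
      · rcases h3' with h3' | ⟨_, hcs'⟩
        · exact absurd (congrArg Sigma.fst h3') hir
        · rcases hcs with ⟨hA, _, hv⟩ | ⟨hA, hv⟩
          · rcases hcs' with ⟨_, _, hv'⟩ | ⟨hA', _⟩
            · exact hv.trans hv'.symm
            · exact absurd ⟨hA, ‹_›⟩ hA'
          · rcases hcs' with ⟨hA', hv'2, _⟩ | ⟨_, hv'⟩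
            · exact absurd ⟨hA', hv'2⟩ hA
            · exact hv.trans hv'.symm
    · obtain ⟨y, hy, _⟩ := hchild x hx
      exact ⟨⟨y, hy⟩⟩
  · -- no arc out of r
    intro u hu
    exact hu.2.1 rfl
  · -- arc-disjointness
    rintro x y ⟨⟨_, hpy, hp3⟩, ⟨_, hmx, hm3⟩⟩
    rcases hp3 with rfl | ⟨hxr, hpc⟩
    · exact hmx rfl
    rcases hm3 with rfl | ⟨hyr, hmc⟩
    · exact hpy rfl
    rcases hpc with ⟨hxa, hyb⟩ | ⟨hxb, hyb⟩
    · rcases hmc with ⟨_, _, hya⟩ | ⟨hA, _⟩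
      · exact havbv y.1 (hya.symm.trans hyb)
      · exact hA ⟨hxr, hxa⟩
    · rcases hmc with ⟨_, hxa, _⟩ | ⟨_, hyb'⟩
      · exact havbv x.1 (hxa.symm.trans hxb)
      · exact hyb hyb'
/-- If `T` (on `t ≥ 2` vertices) has a Hamiltonian cycle and each `H i` has at
least two vertices, then the composition `T[H_1,…,H_t]` has a good pair rooted
at every vertex. -/
theorem stmt4 {t : ℕ} (ht : 2 ≤ t) (T : Fin t → Fin t → Prop)
    (n : Fin t → ℕ) (hn : ∀ i, 2 ≤ n i)
    (H : ∀ i : Fin t, Fin (n i) → Fin (n i) → Prop)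
    (hham : HasHamCycle T) (r : (i : Fin t) × Fin (n i)) :
    GoodPair (CompArc T n H) r := by
  classical
  obtain ⟨l, hnd, hmem, hch, hwrap⟩ := hham
  have ht0 : 0 < t := by omega
  have hlen : l.length = t := by
    have h1 : l.toFinset = Finset.univ :=
      Finset.eq_univ_iff_forall.mpr fun v => List.mem_toFinset.mpr (hmem v)
    have h2 := List.toFinset_card_of_nodup hnd
    rw [h1, Finset.card_univ, Fintype.card_fin] at h2
    omega
  have hpl : l.idxOf r.1 < l.length := List.idxOf_lt_length_iff.mpr (hmem r.1)
  set p := l.idxOf r.1 with hpdef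
  have hp : p < t := by omega
  have hgetlt : ∀ m : ℕ, (p + m) % t < l.length := fun m => by
    rw [hlen]; exact Nat.mod_lt _ ht0
  have hidxlt : ∀ i : Fin t, l.idxOf i < l.length := fun i =>
    List.idxOf_lt_length_iff.mpr (hmem i)
  have hidxlt' : ∀ i : Fin t, l.idxOf i < t := fun i => by
    have := hidxlt i; omega
  have hqlt0 : ∀ i : Fin t, (l.idxOf i + (t - p)) % t < t := fun i =>
    Nat.mod_lt _ ht0
  set c : ℕ → Fin t := fun m => l.get ⟨(p + m) % t, hgetlt m⟩ with hcdef
  set q : Fin t → ℕ := fun i => (l.idxOf i + (t - p)) % t with hqdef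
  have hcapp : ∀ m, c m = l.get ⟨(p + m) % t, hgetlt m⟩ := fun m => rfl
  have hqapp : ∀ i, q i = (l.idxOf i + (t - p)) % t := fun i => rfl
  have hgc : ∀ (j j' : ℕ) (hj : j < l.length) (hj' : j' < l.length), j = j' →
      l.get ⟨j, hj⟩ = l.get ⟨j', hj'⟩ := by
    intro j j' hj hj' h
    subst h
    rfl
  have hgetidx : ∀ i : Fin t, l.get ⟨l.idxOf i, hidxlt i⟩ = i := fun i =>
    List.idxOf_get (hidxlt i)
  have hidxget : ∀ (j : ℕ) (hj : j < l.length), l.idxOf (l.get ⟨j, hj⟩) = j :=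
    fun j hj => List.get_idxOf hnd ⟨j, hj⟩
  have hlen1 : ∀ j : ℕ, j < t → j < l.length := fun j hj => by omega
  have hnxtlt : ∀ j : ℕ, j < t → nxt t j < t := fun j hj => by
    have := nxt_spec t j; omega
  -- the cyclic arc property of the Hamiltonian cycle
  have hcyc : ∀ (j : ℕ) (hj : j < t),
      T (l.get ⟨j, hlen1 j hj⟩) (l.get ⟨nxt t j, hlen1 _ (hnxtlt j hj)⟩) := by
    intro j hj
    have hnil : l ≠ [] := by
      intro h
      rw [h] at hlen
      simp at hlen
      omega
    rcases nxt_spec t j with ⟨h1, h2⟩ | ⟨h1, h2⟩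
    · have hh : l.head? = some (l.get ⟨0, hlen1 0 (by omega)⟩) := by
        rw [List.head?_eq_head hnil]
        exact congrArg some (by rw [List.head_eq_getElem_zero hnil, List.get_eq_getElem])
      have hg : l.getLast? = some (l.get ⟨j, hlen1 j hj⟩) := by
        rw [List.getLast?_eq_getLast hnil]
        refine congrArg some ?_
        have e4 := hgc j (l.length - 1) (hlen1 j hj) (by omega) (by omega)
        rw [List.get_eq_getElem, List.get_eq_getElem] at e4
        rw [List.getLast_eq_getElem hnil, List.get_eq_getElem]
        exact e4.symm
      have hw := hwrap _ _ hh hg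
      have e : l.get ⟨nxt t j, hlen1 _ (hnxtlt j hj)⟩ = l.get ⟨0, hlen1 0 (by omega)⟩ :=
        hgc _ _ _ _ (by omega)
      rw [e]
      exact hw
    · have e : l.get ⟨nxt t j, hlen1 _ (hnxtlt j hj)⟩ = l.get ⟨j + 1, hlen1 _ (by omega)⟩ :=
        hgc _ _ _ _ h2
      rw [e]
      exact List.isChain_iff_getElem.mp hch j (by omega)
  refine keyLemma ht T n hn H r c q ?_ ?_ ?_ ?_ ?_
  · intro i
    rw [hqapp]
    exact hqlt0 i
  · -- c (q i) = i
    intro i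
    rw [hcapp, hqapp]
    have e : (p + (l.idxOf i + (t - p)) % t) % t = l.idxOf i := by
      have h1 := modfact (l.idxOf i + (t - p)) t ht0 (by have := hidxlt' i; omega)
      have h2 := modfact (p + (l.idxOf i + (t - p)) % t) t ht0
        (by have := Nat.mod_lt (l.idxOf i + (t - p)) ht0 (y := t); omega)
      have := hidxlt' i
      omega
    exact (hgc _ _ _ (hidxlt i) e).trans (hgetidx i)
  · -- q (c m) = m
    intro m hm
    rw [hqapp, hcapp, hidxget]
    have h1 := modfact (p + m) t ht0 (by omega)
    have h2 := modfact ((p + m) % t + (t - p)) t ht0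
      (by have := Nat.mod_lt (p + m) ht0 (y := t); omega)
    omega
  · -- c 0 = r.1
    rw [hcapp]
    have e : (p + 0) % t = l.idxOf r.1 := by
      have h1 := modfact (p + 0) t ht0 (by omega)
      omega
    exact (hgc _ _ _ (hidxlt r.1) e).trans (hgetidx r.1)
  · -- arcs along the cycle
    intro m hm
    rw [hcapp, hcapp]
    have e : (p + nxt t m) % t = nxt t ((p + m) % t) := by
      have s1 := nxt_spec t m
      have s2 := nxt_spec t ((p + m) % t)
      have h3 := modfact (p + m) t ht0 (by omega)
      have h4 := modfact (p + nxt t m) t ht0 (by omega)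
      omega
    have hx := hcyc ((p + m) % t) (Nat.mod_lt _ ht0)
    have e2 : l.get ⟨(p + nxt t m) % t, hgetlt (nxt t m)⟩ =
        l.get ⟨nxt t ((p + m) % t), hlen1 _ (hnxtlt _ (Nat.mod_lt _ ht0))⟩ :=
      hgc _ _ _ _ e
    rw [e2]
    have e3 : l.get ⟨(p + m) % t, hgetlt m⟩ =
        l.get ⟨(p + m) % t, hlen1 _ (Nat.mod_lt _ ht0)⟩ := hgc _ _ _ _ rfl
    rw [e3]
    exact hx
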